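/- Let γ : ℝ → ℝ be a Lipschitz continuous extended class-K function (strictly monotone increasing with γ(0) = 0). Let φ : ℝ → ℝ be differentiable and satisfy the differential inequality φ′(t) ≥ -γ(φ(t)) for all t ≥ 0. If φ(0) ≥ 0, then φ(t) ≥ 0 for all t ≥ 0. -/
import Mathlib


/-- Scalar comparison form of forward invariance: if `γ` is a Lipschitz extended
class-K function and `φ` satisfies `φ' t ≥ -γ (φ t)` for all `t ≥ 0`, then
`φ 0 ≥ 0` implies `φ t ≥ 0` for all `t ≥ 0`. -/
theorem scalar_cbf_forward_invariance
    (γ : ℝ → ℝ) (K : NNReal)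
    (hγ_lip : LipschitzWith K γ) (hγ_mono : StrictMono γ) (hγ0 : γ 0 = 0)
    (φ : ℝ → ℝ) (hφ : Differentiable ℝ φ)
    (hineq : ∀ t : ℝ, 0 ≤ t → deriv φ t ≥ -γ (φ t))
    (h0 : φ 0 ≥ 0) :
    ∀ t : ℝ, 0 ≤ t → φ t ≥ 0 := by
  by_contra h
  push_neg at h
  obtain ⟨t₀, ht₀, hφt₀⟩ := h
  -- the set of times in [0, t₀] where φ is nonnegative
  let S : Set ℝ := {t | t ∈ Set.Icc 0 t₀ ∧ 0 ≤ φ t}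
  have hSne : S.Nonempty := ⟨0, ⟨le_refl 0, ht₀⟩, h0⟩
  have hSbdd : BddAbove S := ⟨t₀, fun x hx => hx.1.2⟩
  have hSclosed : IsClosed S := by
    have : S = Set.Icc 0 t₀ ∩ φ ⁻¹' Set.Ici 0 := by
      ext x; simp [S, Set.mem_Icc, and_assoc]
    rw [this]
    exact isClosed_Icc.inter (isClosed_Ici.preimage hφ.continuous)
  have hsS : sSup S ∈ S := hSclosed.csSup_mem hSne hSbdd
  obtain ⟨⟨hs0, hst₀⟩, hφs⟩ := hsS
  set s := sSup S with hs
  have hslt : s < t₀ := lt_of_le_of_ne hst₀ (by intro heq; rw [heq] at hφs; linarith)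
  -- MVT
  obtain ⟨c, hc, hderiv⟩ := exists_deriv_eq_slope φ hslt
    (hφ.continuous.continuousOn) (hφ.differentiableOn)
  have hc0 : 0 ≤ c := le_of_lt (lt_of_le_of_lt hs0 hc.1)
  have hφc : φ c < 0 := by
    by_contra hcc
    push_neg at hcc
    have : c ∈ S := ⟨⟨hc0, le_of_lt hc.2⟩, hcc⟩
    exact absurd (le_csSup hSbdd this) (not_le.mpr hc.1)
  have hγneg : γ (φ c) < 0 := hγ0 ▸ hγ_mono hφc
  have hderivpos : deriv φ c > 0 := lt_of_lt_of_le (by linarith) (hineq c hc0)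
  have hslope : (φ t₀ - φ s) / (t₀ - s) < 0 :=
    div_neg_of_neg_of_pos (by linarith) (by linarith)
  rw [hderiv] at hderivpos
  linarith
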